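/- For every separable state ρ on H = H_A ⊗ H_B with marginals ρ_A = tr_B(ρ) and ρ_B = tr_A(ρ), and for every θ ∈ [0, π], the following inequality holds: ‖ρ − cos θ · ρ_A ⊗ ρ_B‖_CCN ≤ √[ (1 − cos θ · tr(ρ_A²)) (1 − cos θ · tr(ρ_B²)) ]. -/

import Mathlib

open scoped Kronecker ComplexOrder
open Matrix Finset

/-- Hilbert-Schmidt inner product on matrices. -/
noncomputable def hsInner {n : Type*} [Fintype n] (A B : Matrix n n ℂ) : ℂ :=
  (Aᴴ * B).trace

/-- Hilbert-Schmidt norm. -/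
noncomputable def hsNorm {n : Type*} [Fintype n] (A : Matrix n n ℂ) : ℝ :=
  Real.sqrt (hsInner A A).re

/-- A density operator: positive semidefinite with unit trace. -/
def IsDensity {n : Type*} [Fintype n] (ρ : Matrix n n ℂ) : Prop :=
  ρ.PosSemidef ∧ ρ.trace = 1

/-- A separable bipartite state: a convex combination of product density operators. -/
def IsSeparableState {NA NB : ℕ} (ρ : Matrix (Fin NA × Fin NB) (Fin NA × Fin NB) ℂ) : Prop :=
  ∃ (m : ℕ) (p : Fin m → ℝ)
    (ρA : Fin m → Matrix (Fin NA) (Fin NA) ℂ) (ρB : Fin m → Matrix (Fin NB) (Fin NB) ℂ),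
    (∀ i, 0 < p i) ∧ (∑ i, p i = 1) ∧ (∀ i, IsDensity (ρA i)) ∧ (∀ i, IsDensity (ρB i)) ∧
    ρ = ∑ i, (p i : ℂ) • (ρA i ⊗ₖ ρB i)

/-- The computable cross norm (CCN) on bipartite operators. -/
noncomputable def ccn {NA NB : ℕ} (C : Matrix (Fin NA × Fin NB) (Fin NA × Fin NB) ℂ) : ℝ :=
  sInf { r : ℝ | ∃ (n : ℕ) (A : Fin n → Matrix (Fin NA) (Fin NA) ℂ)
    (B : Fin n → Matrix (Fin NB) (Fin NB) ℂ),
    C = ∑ k, A k ⊗ₖ B k ∧ r = ∑ k, hsNorm (A k) * hsNorm (B k) }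

/-- The marginal (reduced density operator) of a bipartite operator on the A-side. -/
noncomputable def margA {NA NB : ℕ} (ρ : Matrix (Fin NA × Fin NB) (Fin NA × Fin NB) ℂ) :
    Matrix (Fin NA) (Fin NA) ℂ :=
  Matrix.of fun i i' => ∑ b : Fin NB, ρ (i, b) (i', b)

/-- The marginal (reduced density operator) of a bipartite operator on the B-side. -/
noncomputable def margB {NA NB : ℕ} (ρ : Matrix (Fin NA × Fin NB) (Fin NA × Fin NB) ℂ) :
    Matrix (Fin NB) (Fin NB) ℂ :=
  Matrix.of fun b b' => ∑ i : Fin NA, ρ (i, b) (i, b')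

section auxlemmas

variable {n : Type*} [Fintype n]

lemma hsInner_eq_sum (A B : Matrix n n ℂ) :
    hsInner A B = ∑ q : n × n, (starRingEnd ℂ) (A q.1 q.2) * B q.1 q.2 := by
  rw [← Finset.univ_product_univ, Finset.sum_product]
  simp only [hsInner, Matrix.trace, Matrix.diag, Matrix.mul_apply, Matrix.conjTranspose_apply]
  rw [Finset.sum_comm]
  simp [Complex.star_def]

lemma hsInner_self_re_nonneg (A : Matrix n n ℂ) : 0 ≤ (hsInner A A).re := by
  rw [hsInner_eq_sum, Complex.re_sum]
  refine Finset.sum_nonneg fun q _ => ?_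
  rw [mul_comm, Complex.mul_conj]
  simp [Complex.normSq_nonneg]

lemma hsInner_real_smul (r t : ℝ) (A B : Matrix n n ℂ) :
    hsInner ((r : ℂ) • A) ((t : ℂ) • B) = ((r * t : ℝ) : ℂ) * hsInner A B := by
  simp only [hsInner, Matrix.conjTranspose_smul, Complex.star_def, Complex.conj_ofReal,
    Matrix.smul_mul, Matrix.mul_smul, smul_smul, Matrix.trace_smul, smul_eq_mul]
  push_cast
  ring

lemma purity {n : Type*} [Fintype n] [DecidableEq n] {A : Matrix n n ℂ} (h : IsDensity A) :
    (hsInner A A).re ≤ 1 := by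
  obtain ⟨hpsd, htr⟩ := h
  have hH : A.IsHermitian := hpsd.1
  have hspec := hH.spectral_theorem
  rw [Unitary.conjStarAlgAut_apply] at hspec
  set U : Matrix n n ℂ := (hH.eigenvectorUnitary : Matrix n n ℂ) with hUdef
  set D : Matrix n n ℂ := Matrix.diagonal (RCLike.ofReal ∘ hH.eigenvalues) with hDdef
  have hU : star U * U = 1 := Matrix.mem_unitaryGroup_iff'.mp (hH.eigenvectorUnitary).2
  have hAA : A * A = (U * D) * (D * star U) := by
    conv_lhs => rw [hspec]
    rw [show (U * D * star U) * (U * D * star U) = U * D * ((star U * U) * (D * star U)) from by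
      simp only [Matrix.mul_assoc], hU, one_mul]
  have htr2 : (A * A).trace = ∑ i, ((hH.eigenvalues i : ℝ) : ℂ) ^ 2 := by
    rw [hAA, Matrix.trace_mul_comm,
      show (D * star U) * (U * D) = D * ((star U * U) * D) from by simp only [Matrix.mul_assoc],
      hU, one_mul, hDdef, Matrix.diagonal_mul_diagonal, Matrix.trace_diagonal]
    simp [sq]
  have htr1 : ∑ i, hH.eigenvalues i = 1 := by
    have h1 : A.trace = D.trace := by
      conv_lhs => rw [hspec]
      rw [Matrix.trace_mul_cycle, hU, one_mul]
    rw [htr, hDdef, Matrix.trace_diagonal] at h1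
    have : ((1 : ℝ) : ℂ) = ((∑ i, hH.eigenvalues i : ℝ) : ℂ) := by push_cast; simpa using h1
    exact_mod_cast this.symm
  have hre : (hsInner A A).re = ∑ i, hH.eigenvalues i ^ 2 := by
    simp only [hsInner, hH.eq, htr2]
    simp [← Complex.ofReal_pow]
  rw [hre]
  calc ∑ i, hH.eigenvalues i ^ 2 ≤ (∑ i, hH.eigenvalues i) ^ 2 :=
        Finset.sum_sq_le_sq_sum_of_nonneg fun i _ => hpsd.eigenvalues_nonneg i
    _ = 1 := by rw [htr1]; norm_num

lemma convex_expand {m : ℕ} (p a b : Fin m → ℂ) (s c : ℂ) (hp : ∑ k, p k = 1)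
    (hc : c = 2 * s - s ^ 2) :
    ∑ k, p k * ((a k - s * (∑ j, p j * a j)) * (b k - s * (∑ j, p j * b j)))
      = ∑ k, p k * a k * b k - c * ((∑ j, p j * a j) * (∑ j, p j * b j)) := by
  have h : ∀ k ∈ (univ : Finset (Fin m)),
      p k * ((a k - s * (∑ j, p j * a j)) * (b k - s * (∑ j, p j * b j)))
        = p k * a k * b k - (s * (∑ j, p j * a j)) * (p k * b k)
          - (s * (∑ j, p j * b j)) * (p k * a k)
          + ((s * (∑ j, p j * a j)) * (s * (∑ j, p j * b j))) * p k := fun k _ => by ring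
  rw [Finset.sum_congr rfl h, Finset.sum_add_distrib, Finset.sum_sub_distrib,
    Finset.sum_sub_distrib, ← Finset.mul_sum, ← Finset.mul_sum, ← Finset.mul_sum, hp, hc]
  ring

lemma hs_expand {n : Type*} [Fintype n] {m : ℕ} (p : Fin m → ℝ) (hp : ∑ k, (p k : ℂ) = 1)
    (M : Fin m → Matrix n n ℂ) (s c : ℝ) (hc : (c : ℂ) = 2 * (s : ℂ) - (s : ℂ) ^ 2) :
    ∑ k, (p k : ℂ) * hsInner (M k - (s : ℂ) • (∑ j, (p j : ℂ) • M j))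
        (M k - (s : ℂ) • (∑ j, (p j : ℂ) • M j))
      = ∑ k, (p k : ℂ) * hsInner (M k) (M k)
        - (c : ℂ) * hsInner (∑ j, (p j : ℂ) • M j) (∑ j, (p j : ℂ) • M j) := by
  set Abar := ∑ j, (p j : ℂ) • M j with hAbar
  have hXent : ∀ (k : Fin m) (q : n × n), (M k - (s : ℂ) • Abar) q.1 q.2
      = M k q.1 q.2 - (s : ℂ) * ∑ j, (p j : ℂ) * M j q.1 q.2 := by
    intro k q
    simp [hAbar, Matrix.sub_apply, Matrix.smul_apply, Matrix.sum_apply, smul_eq_mul]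
  have hXconj : ∀ (k : Fin m) (q : n × n), (starRingEnd ℂ) ((M k - (s : ℂ) • Abar) q.1 q.2)
      = (starRingEnd ℂ) (M k q.1 q.2)
        - (s : ℂ) * ∑ j, (p j : ℂ) * (starRingEnd ℂ) (M j q.1 q.2) := by
    intro k q
    rw [hXent, map_sub, _root_.map_mul, map_sum, Complex.conj_ofReal]
    simp only [_root_.map_mul, Complex.conj_ofReal]
  have hAent : ∀ q : n × n, Abar q.1 q.2 = ∑ j, (p j : ℂ) * M j q.1 q.2 := by
    intro q; simp [hAbar, Matrix.sum_apply, smul_eq_mul]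
  have hAconj : ∀ q : n × n, (starRingEnd ℂ) (Abar q.1 q.2)
      = ∑ j, (p j : ℂ) * (starRingEnd ℂ) (M j q.1 q.2) := by
    intro q
    rw [hAent, map_sum]
    simp only [_root_.map_mul, Complex.conj_ofReal]
  have lhs2 : ∑ k, (p k : ℂ) * hsInner (M k - (s : ℂ) • Abar) (M k - (s : ℂ) • Abar)
      = ∑ q : n × n, ∑ k, (p k : ℂ)
          * (((starRingEnd ℂ) (M k q.1 q.2)
              - (s : ℂ) * ∑ j, (p j : ℂ) * (starRingEnd ℂ) (M j q.1 q.2))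
            * (M k q.1 q.2 - (s : ℂ) * ∑ j, (p j : ℂ) * M j q.1 q.2)) := by
    rw [← Finset.sum_comm]
    refine Finset.sum_congr rfl fun k _ => ?_
    rw [hsInner_eq_sum, Finset.mul_sum]
    exact Finset.sum_congr rfl fun q _ => by rw [hXconj k q, hXent k q]
  have rhs2 : ∑ k, (p k : ℂ) * hsInner (M k) (M k) - (c : ℂ) * hsInner Abar Abar
      = ∑ q : n × n, (∑ k, (p k : ℂ) * ((starRingEnd ℂ) (M k q.1 q.2) * M k q.1 q.2)
          - (c : ℂ) * ((∑ j, (p j : ℂ) * (starRingEnd ℂ) (M j q.1 q.2))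
            * (∑ j, (p j : ℂ) * M j q.1 q.2))) := by
    rw [Finset.sum_sub_distrib]
    congr 1
    · rw [← Finset.sum_comm]
      refine Finset.sum_congr rfl fun k _ => ?_
      rw [hsInner_eq_sum, Finset.mul_sum]
    · rw [hsInner_eq_sum, Finset.mul_sum]
      exact Finset.sum_congr rfl fun q _ => by rw [hAconj q, hAent q]
  rw [lhs2, rhs2]
  refine Finset.sum_congr rfl fun q _ => ?_
  have h := convex_expand (fun k => (p k : ℂ)) (fun k => (starRingEnd ℂ) (M k q.1 q.2))
    (fun k => M k q.1 q.2) (s : ℂ) (c : ℂ) hp hc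
  calc ∑ k, (p k : ℂ) * (((starRingEnd ℂ) (M k q.1 q.2)
          - (s : ℂ) * ∑ j, (p j : ℂ) * (starRingEnd ℂ) (M j q.1 q.2))
          * (M k q.1 q.2 - (s : ℂ) * ∑ j, (p j : ℂ) * M j q.1 q.2))
      = ∑ k, (p k : ℂ) * ((starRingEnd ℂ) (M k q.1 q.2)) * M k q.1 q.2
        - (c : ℂ) * ((∑ j, (p j : ℂ) * (starRingEnd ℂ) (M j q.1 q.2))
          * (∑ j, (p j : ℂ) * M j q.1 q.2)) := h
    _ = _ := by
        congr 1
        exact Finset.sum_congr rfl fun k _ => by ring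

lemma margA_rep {NA NB m : ℕ} (p : Fin m → ℝ) (ρA : Fin m → Matrix (Fin NA) (Fin NA) ℂ)
    (ρB : Fin m → Matrix (Fin NB) (Fin NB) ℂ) (htr : ∀ i, (ρB i).trace = 1) :
    margA (∑ i, (p i : ℂ) • (ρA i ⊗ₖ ρB i)) = ∑ i, (p i : ℂ) • ρA i := by
  ext i i'
  simp only [margA, Matrix.of_apply, Matrix.sum_apply, Matrix.smul_apply,
    Matrix.kroneckerMap_apply, smul_eq_mul]
  rw [Finset.sum_comm]
  refine Finset.sum_congr rfl fun k _ => ?_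
  have h := htr k
  simp only [Matrix.trace, Matrix.diag] at h
  rw [← Finset.mul_sum, ← Finset.mul_sum, h, mul_one]

lemma margB_rep {NA NB m : ℕ} (p : Fin m → ℝ) (ρA : Fin m → Matrix (Fin NA) (Fin NA) ℂ)
    (ρB : Fin m → Matrix (Fin NB) (Fin NB) ℂ) (htr : ∀ i, (ρA i).trace = 1) :
    margB (∑ i, (p i : ℂ) • (ρA i ⊗ₖ ρB i)) = ∑ i, (p i : ℂ) • ρB i := by
  ext b b'
  simp only [margB, Matrix.of_apply, Matrix.sum_apply, Matrix.smul_apply,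
    Matrix.kroneckerMap_apply, smul_eq_mul]
  rw [Finset.sum_comm]
  refine Finset.sum_congr rfl fun k _ => ?_
  have h := htr k
  simp only [Matrix.trace, Matrix.diag] at h
  calc ∑ x : Fin NA, (p k : ℂ) * (ρA k x x * ρB k b b')
      = ∑ x : Fin NA, ((p k : ℂ) * ρB k b b') * ρA k x x := by
        exact Finset.sum_congr rfl fun x _ => by ring
    _ = (p k : ℂ) * ρB k b b' := by rw [← Finset.mul_sum, h, mul_one]

end auxlemmas

/-- The θ-parametrized family of separability criteria: for every separable state ρ and
every θ ∈ [0, π], ‖ρ − cos θ · ρ_A ⊗ ρ_B‖_CCN ≤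
√((1 − cos θ · tr ρ_A²)(1 − cos θ · tr ρ_B²)). -/
theorem stmt16_theta_family_criterion {NA NB : ℕ} (hA : 2 ≤ NA) (hB : 2 ≤ NB)
    (ρ : Matrix (Fin NA × Fin NB) (Fin NA × Fin NB) ℂ)
    (hsep : IsSeparableState ρ)
    (θ : ℝ) (hθ0 : 0 ≤ θ) (hθπ : θ ≤ Real.pi) :
    ccn (ρ - (Real.cos θ : ℂ) • (margA ρ ⊗ₖ margB ρ))
      ≤ Real.sqrt ((1 - Real.cos θ * ((margA ρ * margA ρ).trace.re))
          * (1 - Real.cos θ * ((margB ρ * margB ρ).trace.re))) := by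
  obtain ⟨m, p, ρA, ρB, hp, hps, hdA, hdB, hrep⟩ := hsep
  set c := Real.cos θ with hcdef
  have hc1 : c ≤ 1 := Real.cos_le_one θ
  have h1c : 0 ≤ 1 - c := by linarith
  set s : ℝ := 1 - Real.sqrt (1 - c) with hsdef
  have hs1 : 1 - s = Real.sqrt (1 - c) := by rw [hsdef]; ring
  have hsq2 : (1 - s) ^ 2 = 1 - c := by rw [hs1, Real.sq_sqrt h1c]
  have hsc : 2 * s - s ^ 2 = c := by nlinarith [hsq2]
  have hccast : (c : ℂ) = 2 * (s : ℂ) - (s : ℂ) ^ 2 := by rw [← hsc]; push_cast; ring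
  have hp1 : ∑ k, (p k : ℂ) = 1 := by
    have := congrArg (fun r : ℝ => (r : ℂ)) hps
    push_cast at this
    exact this
  set Abar := ∑ j, (p j : ℂ) • ρA j with hAbar
  set Bbar := ∑ j, (p j : ℂ) • ρB j with hBbar
  have hmA : margA ρ = Abar := by rw [hrep]; exact margA_rep p ρA ρB fun i => (hdB i).2
  have hmB : margB ρ = Bbar := by rw [hrep]; exact margB_rep p ρA ρB fun i => (hdA i).2
  set X : Fin m → Matrix (Fin NA) (Fin NA) ℂ := fun k => ρA k - (s : ℂ) • Abar with hX
  set Y : Fin m → Matrix (Fin NB) (Fin NB) ℂ := fun k => ρB k - (s : ℂ) • Bbar with hY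
  set A' : Fin m → Matrix (Fin NA) (Fin NA) ℂ :=
    fun k => (Real.sqrt (p k) : ℂ) • X k with hA'
  set B' : Fin m → Matrix (Fin NB) (Fin NB) ℂ :=
    fun k => (Real.sqrt (p k) : ℂ) • Y k with hB'
  have hsqrt : ∀ k, ((Real.sqrt (p k) : ℂ)) * (Real.sqrt (p k) : ℂ) = (p k : ℂ) := fun k => by
    rw [← Complex.ofReal_mul, Real.mul_self_sqrt (hp k).le]
  -- the decomposition identity
  have hid : ρ - (c : ℂ) • (margA ρ ⊗ₖ margB ρ) = ∑ k, A' k ⊗ₖ B' k := by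
    rw [hmA, hmB]
    conv_lhs => rw [hrep]
    ext ⟨i, b⟩ ⟨i', b'⟩
    simp only [Matrix.sub_apply, Matrix.sum_apply, Matrix.smul_apply,
      Matrix.kroneckerMap_apply, smul_eq_mul, hA', hB', hX, hY, hAbar, hBbar]
    have hterm : ∀ k ∈ (univ : Finset (Fin m)),
        ((Real.sqrt (p k) : ℂ) * (ρA k i i' - (s : ℂ) * ∑ j, (p j : ℂ) * ρA j i i'))
          * ((Real.sqrt (p k) : ℂ) * (ρB k b b' - (s : ℂ) * ∑ j, (p j : ℂ) * ρB j b b'))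
        = (p k : ℂ) * ((ρA k i i' - (s : ℂ) * ∑ j, (p j : ℂ) * ρA j i i')
          * (ρB k b b' - (s : ℂ) * ∑ j, (p j : ℂ) * ρB j b b')) := fun k _ => by
      rw [← hsqrt k]; ring
    rw [Finset.sum_congr rfl hterm,
      convex_expand (fun k => (p k : ℂ)) (fun k => ρA k i i') (fun k => ρB k b b')
        (s : ℂ) (c : ℂ) hp1 hccast]
    congr 1
    exact Finset.sum_congr rfl fun k _ => by ring
  -- norms of the pieces
  have hnA : ∀ k, hsNorm (A' k) = Real.sqrt (p k * (hsInner (X k) (X k)).re) := by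
    intro k
    simp only [hsNorm, hA']
    rw [hsInner_real_smul, Complex.re_ofReal_mul, Real.mul_self_sqrt (hp k).le]
  have hnB : ∀ k, hsNorm (B' k) = Real.sqrt (p k * (hsInner (Y k) (Y k)).re) := by
    intro k
    simp only [hsNorm, hB']
    rw [hsInner_real_smul, Complex.re_ofReal_mul, Real.mul_self_sqrt (hp k).le]
  -- expansion of the weighted Gram sums
  have hEA : ∑ k, p k * (hsInner (X k) (X k)).re
      = (∑ k, p k * (hsInner (ρA k) (ρA k)).re) - c * (hsInner Abar Abar).re := by
    have h := congrArg Complex.re (hs_expand p hp1 ρA s c hccast)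
    simpa [Complex.re_sum, Complex.sub_re, Complex.re_ofReal_mul, hAbar, hX] using h
  have hEB : ∑ k, p k * (hsInner (Y k) (Y k)).re
      = (∑ k, p k * (hsInner (ρB k) (ρB k)).re) - c * (hsInner Bbar Bbar).re := by
    have h := congrArg Complex.re (hs_expand p hp1 ρB s c hccast)
    simpa [Complex.re_sum, Complex.sub_re, Complex.re_ofReal_mul, hBbar, hY] using h
  have hA1 : ∑ k, p k * (hsInner (ρA k) (ρA k)).re ≤ 1 := by
    calc ∑ k, p k * (hsInner (ρA k) (ρA k)).re ≤ ∑ k, p k * 1 :=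
          Finset.sum_le_sum fun k _ => mul_le_mul_of_nonneg_left (purity (hdA k)) (hp k).le
      _ = 1 := by simpa using hps
  have hB1 : ∑ k, p k * (hsInner (ρB k) (ρB k)).re ≤ 1 := by
    calc ∑ k, p k * (hsInner (ρB k) (ρB k)).re ≤ ∑ k, p k * 1 :=
          Finset.sum_le_sum fun k _ => mul_le_mul_of_nonneg_left (purity (hdB k)) (hp k).le
      _ = 1 := by simpa using hps
  -- marginal traces
  have hHA : Abarᴴ = Abar := by
    rw [hAbar, Matrix.conjTranspose_sum]
    refine Finset.sum_congr rfl fun k _ => ?_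
    rw [Matrix.conjTranspose_smul, (hdA k).1.1.eq]
    simp [Complex.star_def, Complex.conj_ofReal]
  have hHB : Bbarᴴ = Bbar := by
    rw [hBbar, Matrix.conjTranspose_sum]
    refine Finset.sum_congr rfl fun k _ => ?_
    rw [Matrix.conjTranspose_smul, (hdB k).1.1.eq]
    simp [Complex.star_def, Complex.conj_ofReal]
  have htrA : (margA ρ * margA ρ).trace.re = (hsInner Abar Abar).re := by
    rw [hmA]
    simp only [hsInner, hHA]
  have htrB : (margB ρ * margB ρ).trace.re = (hsInner Bbar Bbar).re := by
    rw [hmB]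
    simp only [hsInner, hHB]
  -- nonnegativity and bounds
  have hQA0 : 0 ≤ ∑ k, p k * (hsInner (X k) (X k)).re :=
    Finset.sum_nonneg fun k _ => mul_nonneg (hp k).le (hsInner_self_re_nonneg _)
  have hQB0 : 0 ≤ ∑ k, p k * (hsInner (Y k) (Y k)).re :=
    Finset.sum_nonneg fun k _ => mul_nonneg (hp k).le (hsInner_self_re_nonneg _)
  have hboundA : ∑ k, p k * (hsInner (X k) (X k)).re
      ≤ 1 - c * (margA ρ * margA ρ).trace.re := by
    rw [htrA, hEA]; linarith
  have hboundB : ∑ k, p k * (hsInner (Y k) (Y k)).re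
      ≤ 1 - c * (margB ρ * margB ρ).trace.re := by
    rw [htrB, hEB]; linarith
  have hA0' : 0 ≤ 1 - c * (margA ρ * margA ρ).trace.re := le_trans hQA0 hboundA
  -- conclude via the infimum
  have hbdd : BddBelow { r : ℝ | ∃ (n : ℕ) (A : Fin n → Matrix (Fin NA) (Fin NA) ℂ)
      (B : Fin n → Matrix (Fin NB) (Fin NB) ℂ),
      ρ - (c : ℂ) • (margA ρ ⊗ₖ margB ρ) = ∑ k, A k ⊗ₖ B k
        ∧ r = ∑ k, hsNorm (A k) * hsNorm (B k) } := by
    refine ⟨0, fun r hr => ?_⟩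
    obtain ⟨n', A, B, -, rfl⟩ := hr
    exact Finset.sum_nonneg fun k _ => mul_nonneg (Real.sqrt_nonneg _) (Real.sqrt_nonneg _)
  have hmem : (∑ k, hsNorm (A' k) * hsNorm (B' k)) ∈ { r : ℝ |
      ∃ (n : ℕ) (A : Fin n → Matrix (Fin NA) (Fin NA) ℂ)
      (B : Fin n → Matrix (Fin NB) (Fin NB) ℂ),
      ρ - (c : ℂ) • (margA ρ ⊗ₖ margB ρ) = ∑ k, A k ⊗ₖ B k
        ∧ r = ∑ k, hsNorm (A k) * hsNorm (B k) } := ⟨m, A', B', hid, rfl⟩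
  refine le_trans (csInf_le hbdd hmem) ?_
  calc ∑ k, hsNorm (A' k) * hsNorm (B' k)
      = ∑ k, Real.sqrt (p k * (hsInner (X k) (X k)).re)
          * Real.sqrt (p k * (hsInner (Y k) (Y k)).re) :=
        Finset.sum_congr rfl fun k _ => by rw [hnA k, hnB k]
    _ ≤ Real.sqrt (∑ k, p k * (hsInner (X k) (X k)).re)
          * Real.sqrt (∑ k, p k * (hsInner (Y k) (Y k)).re) :=
        Real.sum_sqrt_mul_sqrt_le _
          (fun k => mul_nonneg (hp k).le (hsInner_self_re_nonneg _))
          (fun k => mul_nonneg (hp k).le (hsInner_self_re_nonneg _))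
    _ ≤ Real.sqrt (1 - c * (margA ρ * margA ρ).trace.re)
          * Real.sqrt (1 - c * (margB ρ * margB ρ).trace.re) :=
        mul_le_mul (Real.sqrt_le_sqrt hboundA) (Real.sqrt_le_sqrt hboundB)
          (Real.sqrt_nonneg _) (Real.sqrt_nonneg _)
    _ = Real.sqrt ((1 - c * (margA ρ * margA ρ).trace.re)
          * (1 - c * (margB ρ * margB ρ).trace.re)) := (Real.sqrt_mul hA0' _).symm
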